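/- Box lemma: let U and V be persistence modules over ℝ that are δ-interleaved (δ ≥ 0). Let −∞ ≤ a < b ≤ c < d ≤ +∞ with b and c finite and b + δ ≤ c − δ. Then μ_U([a,b]×[c,d]) ≤ μ_V([a−δ, b+δ]×[c−δ, d+δ]) and μ_V([a,b]×[c,d]) ≤ μ_U([a−δ, b+δ]×[c−δ, d+δ]), with the conventions −∞ − δ = −∞ and +∞ + δ = +∞. -/

import Mathlib

attribute [local instance] Classical.propDecidable

structure PersMod (k : Type) [Field k] (T : Type) [Preorder T] where
  space : T → Type
  [addCommGroup : ∀ t, AddCommGroup (space t)]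
  [module : ∀ t, Module k (space t)]
  map : ∀ s t : T, s ≤ t → space s →ₗ[k] space t
  map_id : ∀ t, map t t le_rfl = LinearMap.id
  map_comp : ∀ r s t (h1 : r ≤ s) (h2 : s ≤ t),
    (map s t h2).comp (map r s h1) = map r t (h1.trans h2)

attribute [instance] PersMod.addCommGroup PersMod.module

def PersIso {k : Type} [Field k] {T : Type} [Preorder T] (U V : PersMod k T) : Prop :=
  ∃ e : ∀ t, U.space t ≃ₗ[k] V.space t,
    ∀ s t (h : s ≤ t),
      (e t).toLinearMap.comp (U.map s t h) = (V.map s t h).comp (e s).toLinearMap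

def IsIntervalSet {T : Type} [Preorder T] (J : Set T) : Prop :=
  J.Nonempty ∧ ∀ ⦃r s t : T⦄, r ∈ J → t ∈ J → r ≤ s → s ≤ t → s ∈ J

noncomputable def intervalModule (k : Type) [Field k] (T : Type) [Preorder T]
    (J : Set T) (hJ : IsIntervalSet J) : PersMod k T where
  space t := PLift (t ∈ J) → k
  addCommGroup := fun _ => inferInstance
  module := fun _ => inferInstance
  map s t _ :=
    { toFun := fun f _ => if hs : s ∈ J then f ⟨hs⟩ else 0
      map_add' := fun f g => by
        funext ht; by_cases hs : s ∈ J <;> simp [hs]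
      map_smul' := fun c f => by
        funext ht; by_cases hs : s ∈ J <;> simp [hs] }
  map_id t := by
    refine LinearMap.ext fun f => funext fun ht => ?_
    show (if hs : t ∈ J then f ⟨hs⟩ else 0) = f ht
    rw [dif_pos ht.down]
  map_comp r s t h1 h2 := by
    refine LinearMap.ext fun f => funext fun ht => ?_
    show (if hs : s ∈ J then (if hr : r ∈ J then f ⟨hr⟩ else 0) else 0)
        = (if hr : r ∈ J then f ⟨hr⟩ else 0)
    by_cases hr : r ∈ J
    · have hs : s ∈ J := hJ.2 hr ht.down h1 h2
      simp [hr, hs]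
    · by_cases hs : s ∈ J <;> simp [hr, hs]

noncomputable def dsum {k : Type} [Field k] {T : Type} [Preorder T] {L : Type}
    (V : L → PersMod k T) : PersMod k T where
  space t := DFinsupp (fun ℓ => (V ℓ).space t)
  addCommGroup := fun _ => inferInstance
  module := fun _ => inferInstance
  map s t h := DFinsupp.mapRange.linearMap (fun ℓ => (V ℓ).map s t h)
  map_id t := by
    show DFinsupp.mapRange.linearMap (fun ℓ => (V ℓ).map t t le_rfl) = LinearMap.id
    have : (fun ℓ => (V ℓ).map t t le_rfl)
        = fun ℓ => (LinearMap.id : (V ℓ).space t →ₗ[k] (V ℓ).space t) :=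
      funext fun ℓ => (V ℓ).map_id t
    rw [this]
    exact DFinsupp.mapRange.linearMap_id
  map_comp r s t h1 h2 := by
    show (DFinsupp.mapRange.linearMap (fun ℓ => (V ℓ).map s t h2)).comp
        (DFinsupp.mapRange.linearMap (fun ℓ => (V ℓ).map r s h1))
      = DFinsupp.mapRange.linearMap (fun ℓ => (V ℓ).map r t (h1.trans h2))
    rw [← DFinsupp.mapRange.linearMap_comp]
    congr 1
    funext ℓ
    exact (V ℓ).map_comp r s t h1 h2

open scoped ENNReal

section Dim

noncomputable def edim (k : Type) [Field k] (M : Type) [AddCommGroup M] [Module k M] : ℕ∞ :=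
  Cardinal.toENat (Module.rank k M)

noncomputable def erank {k : Type} [Field k] {M N : Type} [AddCommGroup M] [Module k M]
    [AddCommGroup N] [Module k N] (f : M →ₗ[k] N) : ℕ∞ :=
  edim k (LinearMap.range f)

noncomputable def ecard (S : Type) : ℕ∞ := Cardinal.toENat (Cardinal.mk S)

end Dim

section Matchings

noncomputable def eDiff (x y : EReal) : ℝ≥0∞ :=
  if x = y then 0
  else if x = ⊤ ∨ x = ⊥ ∨ y = ⊤ ∨ y = ⊥ then ⊤
  else ENNReal.ofReal |x.toReal - y.toReal|

noncomputable def dPt (α β : EReal × EReal) : ℝ≥0∞ :=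
  max (eDiff α.1 β.1) (eDiff α.2 β.2)

noncomputable def diagDist (α : EReal × EReal) : ℝ≥0∞ :=
  if α.1 = ⊥ ∨ α.2 = ⊤ then ⊤ else ENNReal.ofReal ((α.2.toReal - α.1.toReal) / 2)

def IsMatching {α β : Type} (M : Set (α × β)) : Prop :=
  (∀ a b b', (a, b) ∈ M → (a, b') ∈ M → b = b') ∧
  (∀ a a' b, (a, b) ∈ M → (a', b) ∈ M → a = a')

def IsDeltaMatching {α β : Type} (A : α → EReal × EReal) (B : β → EReal × EReal)
    (δ : ℝ≥0∞) : Prop :=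
  ∃ M : Set (α × β), IsMatching M ∧
    (∀ p ∈ M, dPt (A p.1) (B p.2) ≤ δ) ∧
    (∀ a, (∀ b, (a, b) ∉ M) → diagDist (A a) ≤ δ) ∧
    (∀ b, (∀ a, (a, b) ∉ M) → diagDist (B b) ≤ δ)

noncomputable def dBottle {α β : Type} (A : α → EReal × EReal) (B : β → EReal × EReal) : ℝ≥0∞ :=
  sInf {d : ℝ≥0∞ | ∃ δ : ℝ, 0 ≤ δ ∧ IsDeltaMatching A B (ENNReal.ofReal δ) ∧ d = ENNReal.ofReal δ}

end Matchings

section Measure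

noncomputable def persIm {k : Type} [Field k] (V : PersMod k ℝ) (a : EReal) (c : ℝ) :
    Submodule k (V.space c) :=
  if h : ∃ a' : ℝ, a = (a' : EReal) ∧ a' ≤ c then
    LinearMap.range (V.map h.choose c h.choose_spec.2)
  else ⊥

noncomputable def persKer {k : Type} [Field k] (V : PersMod k ℝ) (c : ℝ) (d : EReal) :
    Submodule k (V.space c) :=
  if h : ∃ d' : ℝ, d = (d' : EReal) ∧ c ≤ d' then
    LinearMap.ker (V.map c h.choose h.choose_spec.2)
  else ⊤

noncomputable def persMeasure {k : Type} [Field k] (V : PersMod k ℝ)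
    (a : EReal) (b c : ℝ) (d : EReal) : ℕ∞ :=
  edim k
    (↥(persIm V (b : EReal) c ⊓ persKer V c d) ⧸
      Submodule.comap (persIm V (b : EReal) c ⊓ persKer V c d).subtype
        (persIm V a c ⊓ persKer V c d))

end Measure

section Interleaving

def Interleaved (k : Type) [Field k] (U V : PersMod k ℝ) (δ : ℝ) : Prop :=
  ∃ (φ : ∀ t : ℝ, U.space t →ₗ[k] V.space (t + δ))
    (ψ : ∀ t : ℝ, V.space t →ₗ[k] U.space (t + δ)),
    (∀ s t (h : s ≤ t),
      (φ t).comp (U.map s t h) = (V.map (s + δ) (t + δ) (by linarith)).comp (φ s)) ∧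
    (∀ s t (h : s ≤ t),
      (ψ t).comp (V.map s t h) = (U.map (s + δ) (t + δ) (by linarith)).comp (ψ s)) ∧
    (∀ t (h : t ≤ t + δ + δ), (ψ (t + δ)).comp (φ t) = U.map t (t + δ + δ) h) ∧
    (∀ t (h : t ≤ t + δ + δ), (φ (t + δ)).comp (ψ t) = V.map t (t + δ + δ) h)

noncomputable def dInter (k : Type) [Field k] (U V : PersMod k ℝ) : ℝ≥0∞ :=
  sInf {d : ℝ≥0∞ | ∃ δ : ℝ, 0 ≤ δ ∧ Interleaved k U V δ ∧ d = ENNReal.ofReal δ}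

def QTame (k : Type) [Field k] (V : PersMod k ℝ) : Prop :=
  ∀ s t : ℝ, ∀ h : s < t, erank (V.map s t h.le) ≠ ⊤

def LocFinitePM (k : Type) [Field k] (W : PersMod k ℝ) : Prop :=
  ∃ (L : Type) (J : L → Set ℝ) (hJ : ∀ ℓ, IsIntervalSet (J ℓ)),
    PersIso W (dsum fun ℓ => intervalModule k ℝ (J ℓ) (hJ ℓ)) ∧
    ∀ S : Set ℝ, Bornology.IsBounded S → {ℓ : L | (J ℓ ∩ S).Nonempty}.Finite

noncomputable def zeroPers (k : Type) [Field k] : PersMod k ℝ where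
  space _ := PUnit
  addCommGroup := fun _ => inferInstance
  module := fun _ => inferInstance
  map _ _ _ := 0
  map_id t := LinearMap.ext fun x => Subsingleton.elim _ _
  map_comp r s t h1 h2 := LinearMap.ext fun x => Subsingleton.elim _ _

noncomputable def smoothing {k : Type} [Field k] (V : PersMod k ℝ) (ε : ℝ) (hε : 0 < ε) :
    PersMod k ℝ where
  space t := LinearMap.range (V.map (t - ε) (t + ε) (by linarith))
  addCommGroup := fun _ => inferInstance
  module := fun _ => inferInstance
  map s t h := LinearMap.restrict (V.map (s + ε) (t + ε) (by linarith))
    (p := LinearMap.range (V.map (s - ε) (s + ε) (by linarith)))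
    (q := LinearMap.range (V.map (t - ε) (t + ε) (by linarith)))
    (by
      rintro x ⟨y, rfl⟩
      refine ⟨V.map (s - ε) (t - ε) (by linarith) y, ?_⟩
      have h1 := LinearMap.congr_fun
        (V.map_comp (s - ε) (t - ε) (t + ε) (by linarith) (by linarith)) y
      have h2 := LinearMap.congr_fun
        (V.map_comp (s - ε) (s + ε) (t + ε) (by linarith) (by linarith)) y
      simp only [LinearMap.comp_apply] at h1 h2
      rw [h1, h2])
  map_id t := by
    refine LinearMap.ext fun x => Subtype.ext ?_
    have := LinearMap.congr_fun (V.map_id (t + ε)) x.1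
    simpa [LinearMap.restrict_apply] using this
  map_comp r s t h1 h2 := by
    refine LinearMap.ext fun x => Subtype.ext ?_
    have := LinearMap.congr_fun
      (V.map_comp (r + ε) (s + ε) (t + ε) (by linarith) (by linarith)) x.1
    simpa [LinearMap.restrict_apply] using this

end Interleaving

section Webb

def webbSubmodule (k : Type) [Field k] (t : ℤ) : Submodule k (ℕ → k) where
  carrier := {x | ∀ i : ℕ, (i : ℤ) < -t → x i = 0}
  add_mem' := by
    intro x y hx hy i hi
    simp [Pi.add_apply, hx i hi, hy i hi]
  zero_mem' := by
    intro i hi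
    rfl
  smul_mem' := by
    intro c x hx i hi
    simp [Pi.smul_apply, hx i hi]

noncomputable def webbModule (k : Type) [Field k] : PersMod k ↥{n : ℤ | n ≤ 0} where
  space t := ↥(webbSubmodule k t.1)
  addCommGroup := fun _ => inferInstance
  module := fun _ => inferInstance
  map s t h := Submodule.inclusion (by
    intro x hx
    have hx' : ∀ i : ℕ, (i : ℤ) < -s.1 → x i = 0 := hx
    intro i hi
    exact hx' i (lt_of_lt_of_le hi (neg_le_neg h)))
  map_id t := LinearMap.ext fun x => rfl
  map_comp r s t h1 h2 := LinearMap.ext fun x => rfl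

end Webb

section Decorated

/-- `decMem t x` : the real number `t` belongs to the interval described by the
decorated pair `x = ((p, εp), (q, εq))`, where the decoration `false` means `⁻`
and `true` means `⁺`. -/
def decMem (t : ℝ) (x : (EReal × Bool) × (EReal × Bool)) : Prop :=
  (x.1.1 < (t : EReal) ∨ (x.1.1 = (t : EReal) ∧ x.1.2 = false)) ∧
  ((t : EReal) < x.2.1 ∨ ((t : EReal) = x.2.1 ∧ x.2.2 = true))

/-- A valid decorated pair: the left coordinate is `p⁻`/`p⁺` for a real `p` or `−∞⁺`,
the right coordinate is `q⁻`/`q⁺` for a real `q` or `+∞⁻`, and the corresponding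
interval is nonempty (i.e. `p* < q*`). -/
def ValidDec (x : (EReal × Bool) × (EReal × Bool)) : Prop :=
  (x.1.1 = ⊥ → x.1.2 = true) ∧ x.1.1 ≠ ⊤ ∧ (x.2.1 = ⊤ → x.2.2 = false) ∧ x.2.1 ≠ ⊥ ∧
  {t : ℝ | decMem t x}.Nonempty

/-- The decorated pair `x` belongs to the rectangle `[a,b] × [c,d]`, i.e.
`[b,c] ⊆ ⟨p*,q*⟩ ⊆ (a,d)`. -/
def decInRect (x : (EReal × Bool) × (EReal × Bool)) (a : EReal) (b c : ℝ) (d : EReal) : Prop :=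
  (∀ t ∈ Set.Icc b c, decMem t x) ∧
  (∀ t : ℝ, decMem t x → a < (t : EReal) ∧ (t : EReal) < d)

/-- `Dgm` is (a labelling of) the decorated persistence diagram of `V`. -/
def IsDgmOf {k : Type} [Field k] (V : PersMod k ℝ) {ι : Type}
    (Dgm : ι → (EReal × Bool) × (EReal × Bool)) : Prop :=
  (∀ i, ValidDec (Dgm i)) ∧
  ∀ (a : EReal) (b c : ℝ) (d : EReal), a < (b : EReal) → b ≤ c → (c : EReal) < d →
    persMeasure V a b c d = ecard {i : ι // decInRect (Dgm i) a b c d}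

end Decorated

section RMeasure

/-- `[a,b] × [c,d]` is a (nondegenerate) rectangle contained in `D`. -/
def RectIn (D : Set (ℝ × ℝ)) (a b c d : ℝ) : Prop :=
  a < b ∧ c < d ∧ Set.Icc a b ×ˢ Set.Icc c d ⊆ D

/-- An r-measure on `D`: additivity under horizontal and vertical splitting. -/
def IsRMeasure (D : Set (ℝ × ℝ)) (μ : ℝ → ℝ → ℝ → ℝ → ℕ∞) : Prop :=
  (∀ a p b c d, a < p → p < b → RectIn D a b c d → μ a b c d = μ a p c d + μ p b c d) ∧
  (∀ a b c q d, c < q → q < d → RectIn D a b c d → μ a b c d = μ a b c q + μ a b q d)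

/-- Membership of a decorated point of the plane (`Bool` decoration: `true` = `⁺`,
`false` = `⁻`) in the closed rectangle `[a,b] × [c,d]`. -/
def dptMem (x : (ℝ × Bool) × (ℝ × Bool)) (a b c d : ℝ) : Prop :=
  a ≤ x.1.1 ∧ x.1.1 ≤ b ∧ c ≤ x.2.1 ∧ x.2.1 ≤ d ∧
  (x.1.1 = a → x.1.2 = true) ∧ (x.1.1 = b → x.1.2 = false) ∧
  (x.2.1 = c → x.2.2 = true) ∧ (x.2.1 = d → x.2.2 = false)

/-- The r-interior `D•` of `D`: decorated points contained in some rectangle of `D`. -/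
def rInt (D : Set (ℝ × ℝ)) : Set ((ℝ × Bool) × (ℝ × Bool)) :=
  {x | ∃ a b c d, RectIn D a b c d ∧ dptMem x a b c d}

/-- The number of decorated points, counted with multiplicity `m`, lying in the
rectangle `[a,b] × [c,d]`. -/
noncomputable def dcount (m : (ℝ × Bool) × (ℝ × Bool) → ℕ) (a b c d : ℝ) : ℕ∞ :=
  ecard (Σ x : {x : (ℝ × Bool) × (ℝ × Bool) // dptMem x a b c d}, Fin (m x.1))

end RMeasure

section BoxLemmaProof

variable {k : Type} [Field k]

lemma persIm_coe' (V : PersMod k ℝ) (x c : ℝ) (h : x ≤ c) :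
    persIm V (x : EReal) c = LinearMap.range (V.map x c h) := by
  have hex : ∃ a' : ℝ, (x : EReal) = (a' : EReal) ∧ a' ≤ c := ⟨x, rfl, h⟩
  have key : ∀ (y : ℝ) (hy : y ≤ c), y = x →
      LinearMap.range (V.map y c hy) = LinearMap.range (V.map x c h) := by
    rintro y hy rfl; rfl
  rw [persIm, dif_pos hex]
  exact key _ _ (by exact_mod_cast hex.choose_spec.1.symm)

lemma persIm_bot' (V : PersMod k ℝ) (c : ℝ) : persIm V (⊥ : EReal) c = ⊥ := by
  rw [persIm, dif_neg]
  rintro ⟨a', ha, -⟩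
  exact absurd ha (by simp)

lemma persKer_coe' (V : PersMod k ℝ) (c x : ℝ) (h : c ≤ x) :
    persKer V c (x : EReal) = LinearMap.ker (V.map c x h) := by
  have hex : ∃ d' : ℝ, (x : EReal) = (d' : EReal) ∧ c ≤ d' := ⟨x, rfl, h⟩
  have key : ∀ (y : ℝ) (hy : c ≤ y), y = x →
      LinearMap.ker (V.map c y hy) = LinearMap.ker (V.map c x h) := by
    rintro y hy rfl; rfl
  rw [persKer, dif_pos hex]
  exact key _ _ (by exact_mod_cast hex.choose_spec.1.symm)

lemma persKer_top' (V : PersMod k ℝ) (c : ℝ) : persKer V c (⊤ : EReal) = ⊤ := by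
  rw [persKer, dif_neg]
  rintro ⟨d', hd, -⟩
  exact absurd hd (by simp)

lemma edim_le_of_injective' {M N : Type} [AddCommGroup M] [Module k M]
    [AddCommGroup N] [Module k N] (f : M →ₗ[k] N) (hf : Function.Injective f) :
    edim k M ≤ edim k N :=
  Cardinal.toENat.monotone' (f.rank_le_of_injective hf)

lemma edim_le_of_surjective' {M N : Type} [AddCommGroup M] [Module k M]
    [AddCommGroup N] [Module k N] (f : M →ₗ[k] N) (hf : Function.Surjective f) :
    edim k N ≤ edim k M :=
  Cardinal.toENat.monotone' (f.rank_le_of_surjective hf)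

lemma edim_eq_of_equiv' {M N : Type} [AddCommGroup M] [Module k M]
    [AddCommGroup N] [Module k N] (e : M ≃ₗ[k] N) : edim k M = edim k N :=
  congrArg Cardinal.toENat e.rank_eq

lemma ereal_lt_coe_cases (b : ℝ) (a : EReal) (h : a < (b : EReal)) :
    a = ⊥ ∨ ∃ a0 : ℝ, a = (a0 : EReal) ∧ a0 < b := by
  induction a using EReal.rec with
  | bot => exact Or.inl rfl
  | coe a0 => exact Or.inr ⟨a0, rfl, by exact_mod_cast h⟩
  | top => exact absurd h (by simp)

lemma coe_lt_ereal_cases (c : ℝ) (d : EReal) (h : (c : EReal) < d) :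
    d = ⊤ ∨ ∃ d0 : ℝ, d = (d0 : EReal) ∧ c < d0 := by
  induction d using EReal.rec with
  | bot => exact absurd h (by simp)
  | coe d0 => exact Or.inr ⟨d0, rfl, by exact_mod_cast h⟩
  | top => exact Or.inl rfl

/-- The core linear-algebra lemma behind the box lemma. -/
lemma boxCore {B C' C : Type} [AddCommGroup B] [Module k B] [AddCommGroup C'] [Module k C']
    [AddCommGroup C] [Module k C]
    (f : B →ₗ[k] C') (g : C' →ₗ[k] C) (K : Submodule k C) (K' I' J' : Submodule k C')
    (J : Submodule k C)
    (hK : ∀ z, g z ∈ K → z ∈ K')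
    (hI : LinearMap.range f ≤ I')
    (hJ : ∀ z ∈ J', g z ∈ J)
    (X : Submodule k C) (hX : X = LinearMap.range (g.comp f) ⊓ K) :
    edim k (↥X ⧸ Submodule.comap X.subtype (J ⊓ K)) ≤
    edim k
      (↥(I' ⊓ K') ⧸ Submodule.comap (I' ⊓ K').subtype (J' ⊓ K')) := by
  subst hX
  set u : B →ₗ[k] C := g.comp f with hu
  set W : Submodule k C' := Submodule.map f (Submodule.comap u K) with hWdef
  have hWmem : ∀ z ∈ W, g z ∈ K := by
    rintro z ⟨y, hy, rfl⟩; exact hy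
  have hWX2 : W ≤ I' ⊓ K' := by
    rintro z hz
    obtain ⟨y, hy, rfl⟩ := hz
    exact ⟨hI ⟨y, rfl⟩, hK _ hy⟩
  have hgW : Submodule.map g W = LinearMap.range u ⊓ K := by
    rw [hWdef, ← Submodule.map_comp, ← hu, Submodule.map_comap_eq]
  have hres : ∀ x ∈ W, g x ∈ LinearMap.range u ⊓ K :=
    fun x hx => hgW ▸ Submodule.mem_map_of_mem hx
  set X1 : Submodule k C := LinearMap.range u ⊓ K with hX1
  set Y1 : Submodule k ↥X1 := Submodule.comap X1.subtype (J ⊓ K) with hY1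
  let G0 : ↥W →ₗ[k] ↥X1 := g.restrict hres
  let G : ↥W →ₗ[k] (↥X1 ⧸ Y1) := Y1.mkQ.comp G0
  have hGsurj : Function.Surjective G := by
    intro q
    obtain ⟨x, rfl⟩ := Y1.mkQ_surjective q
    have hx : (x : C) ∈ Submodule.map g W := by rw [hgW]; exact x.2
    obtain ⟨w, hw, hwx⟩ := hx
    refine ⟨⟨w, hw⟩, ?_⟩
    show Y1.mkQ (G0 ⟨w, hw⟩) = Y1.mkQ x
    congr 1
    exact Subtype.ext hwx
  set N : Submodule k ↥W := Submodule.comap W.subtype (J' ⊓ K') with hN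
  have hNker : N ≤ LinearMap.ker G := by
    rintro ⟨x, hx⟩ hn
    have hn' : x ∈ J' ⊓ K' := hn
    have hgx : g x ∈ J ⊓ K := ⟨hJ x hn'.1, hWmem x hx⟩
    show Y1.mkQ (G0 ⟨x, hx⟩) = 0
    rw [Submodule.mkQ_apply, Submodule.Quotient.mk_eq_zero]
    exact hgx
  have e1 : edim k (↥X1 ⧸ Y1) = edim k (↥W ⧸ LinearMap.ker G) :=
    (edim_eq_of_equiv' (LinearMap.quotKerEquivOfSurjective G hGsurj)).symm
  have e2 : edim k (↥W ⧸ LinearMap.ker G) ≤ edim k (↥W ⧸ N) := by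
    have hle : N ≤ LinearMap.ker (LinearMap.ker G).mkQ := by
      rw [Submodule.ker_mkQ]; exact hNker
    have hsurj : Function.Surjective (N.liftQ (LinearMap.ker G).mkQ hle) := by
      intro q
      obtain ⟨x, rfl⟩ := (LinearMap.ker G).mkQ_surjective q
      exact ⟨N.mkQ x, rfl⟩
    exact edim_le_of_surjective' _ hsurj
  have e3 : edim k (↥W ⧸ N) ≤
      edim k (↥(I' ⊓ K') ⧸ Submodule.comap (I' ⊓ K').subtype (J' ⊓ K')) := by
    set Y2 := Submodule.comap (I' ⊓ K').subtype (J' ⊓ K') with hY2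
    set φ : ↥W →ₗ[k] (↥(I' ⊓ K') ⧸ Y2) := Y2.mkQ.comp (Submodule.inclusion hWX2) with hφ
    have hφker : LinearMap.ker φ = N := by
      ext x
      constructor
      · intro hx
        have hx' : Y2.mkQ (Submodule.inclusion hWX2 x) = 0 := hx
        rw [Submodule.mkQ_apply, Submodule.Quotient.mk_eq_zero] at hx'
        exact hx'
      · intro hx
        show Y2.mkQ (Submodule.inclusion hWX2 x) = 0
        rw [Submodule.mkQ_apply, Submodule.Quotient.mk_eq_zero]
        exact hx
    have hinj : Function.Injective (N.liftQ φ hφker.ge) := by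
      rw [← LinearMap.ker_eq_bot]
      exact Submodule.ker_liftQ_eq_bot _ _ _ hφker.le
    exact edim_le_of_injective' _ hinj
  calc edim k (↥X1 ⧸ Y1) = edim k (↥W ⧸ LinearMap.ker G) := e1
    _ ≤ edim k (↥W ⧸ N) := e2
    _ ≤ _ := e3

lemma boxHalf (U V : PersMod k ℝ) (δ : ℝ) (hδ : 0 ≤ δ)
    (hI : Interleaved k U V δ) (a : EReal) (b c : ℝ) (d : EReal)
    (hab : a < (b : EReal)) (hbc : b ≤ c) (hcd : (c : EReal) < d)
    (hthick : b + δ ≤ c - δ) :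
    persMeasure U a b c d ≤
      persMeasure V (a - (δ : EReal)) (b + δ) (c - δ) (d + (δ : EReal)) := by
  obtain ⟨φ, ψ, hφ, hψ, hψφ, hφψ⟩ := hI
  have h1 : c - δ + δ ≤ c := by linarith
  have h2 : b ≤ b + δ + δ := by linarith
  have h3 : b + δ + δ ≤ c - δ + δ := by linarith
  set f : U.space b →ₗ[k] V.space (c - δ) := (V.map (b + δ) (c - δ) hthick).comp (φ b) with hf
  set g : V.space (c - δ) →ₗ[k] U.space c := (U.map (c - δ + δ) c h1).comp (ψ (c - δ)) with hg
  have hgf : g.comp f = U.map b c hbc := by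
    refine LinearMap.ext fun x => ?_
    have e1 := LinearMap.congr_fun (hψ (b + δ) (c - δ) hthick) (φ b x)
    have e2 := LinearMap.congr_fun (hψφ b h2) x
    have e3 := LinearMap.congr_fun (U.map_comp b (b + δ + δ) (c - δ + δ) h2 h3) x
    have e4 := LinearMap.congr_fun (U.map_comp b (c - δ + δ) c (h2.trans h3) h1) x
    simp only [LinearMap.comp_apply] at e1 e2 e3 e4
    simp only [hf, hg, LinearMap.comp_apply]
    rw [e1, e2, e3, e4]
  have him : LinearMap.range (g.comp f) = persIm U (b : EReal) c := by
    rw [hgf, persIm_coe' U b c hbc]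
  have hI' : LinearMap.range f ≤ persIm V ((b + δ : ℝ) : EReal) (c - δ) := by
    rw [persIm_coe' V (b + δ) (c - δ) hthick, hf]
    exact LinearMap.range_comp_le_range (φ b) (V.map (b + δ) (c - δ) hthick)
  have hK : ∀ z, g z ∈ persKer U c d → z ∈ persKer V (c - δ) (d + (δ : EReal)) := by
    rcases coe_lt_ereal_cases c d hcd with hd | ⟨d0, rfl, hcd0⟩
    · subst hd
      intro z _
      rw [show (⊤ : EReal) + (δ : EReal) = ⊤ from EReal.top_add_coe δ, persKer_top']
      trivial
    · have hcd0' : c - δ ≤ d0 + δ := by linarith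
      intro z hz
      rw [persKer_coe' U c d0 hcd0.le] at hz
      rw [show (d0 : EReal) + (δ : EReal) = ((d0 + δ : ℝ) : EReal) from (EReal.coe_add d0 δ).symm,
        persKer_coe' V (c - δ) (d0 + δ) hcd0']
      rw [LinearMap.mem_ker] at hz ⊢
      have hz' : U.map c d0 hcd0.le (U.map (c - δ + δ) c h1 (ψ (c - δ) z)) = 0 := hz
      have k1 := LinearMap.congr_fun (hφψ (c - δ) (by linarith)) z
      have k2 := LinearMap.congr_fun (hφ (c - δ + δ) d0 (by linarith)) (ψ (c - δ) z)
      have k3 := LinearMap.congr_fun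
        (V.map_comp (c - δ) (c - δ + δ + δ) (d0 + δ) (by linarith) (by linarith)) z
      have k4 := LinearMap.congr_fun (U.map_comp (c - δ + δ) c d0 h1 hcd0.le) (ψ (c - δ) z)
      simp only [LinearMap.comp_apply] at k1 k2 k3 k4
      rw [← k3, ← k1, ← k2, ← k4, hz', map_zero]
  have hJ : ∀ z ∈ persIm V (a - (δ : EReal)) (c - δ), g z ∈ persIm U a c := by
    rcases ereal_lt_coe_cases b a hab with ha | ⟨a0, rfl, ha0⟩
    · subst ha
      intro z hz
      rw [EReal.bot_sub, persIm_bot'] at hz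
      have hz0 : z = 0 := by simpa using hz
      rw [hz0, map_zero]
      exact zero_mem _
    · have ha0c : a0 ≤ c := by linarith
      have ha0c' : a0 - δ ≤ c - δ := by linarith
      have ha0' : a0 - δ + δ ≤ a0 := by linarith
      intro z hz
      rw [show (a0 : EReal) - (δ : EReal) = ((a0 - δ : ℝ) : EReal) from rfl,
        persIm_coe' V (a0 - δ) (c - δ) ha0c'] at hz
      rw [persIm_coe' U a0 c ha0c]
      obtain ⟨w, rfl⟩ := hz
      have j1 := LinearMap.congr_fun (hψ (a0 - δ) (c - δ) ha0c') w
      have j2 := LinearMap.congr_fun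
        (U.map_comp (a0 - δ + δ) (c - δ + δ) c (by linarith) h1) (ψ (a0 - δ) w)
      have j3 := LinearMap.congr_fun
        (U.map_comp (a0 - δ + δ) a0 c ha0' ha0c) (ψ (a0 - δ) w)
      simp only [LinearMap.comp_apply] at j1 j2 j3
      refine ⟨U.map (a0 - δ + δ) a0 ha0' (ψ (a0 - δ) w), ?_⟩
      rw [j3, ← j2, ← j1]
      rfl
  simp only [persMeasure]
  exact boxCore f g (persKer U c d) (persKer V (c - δ) (d + (δ : EReal)))
    (persIm V ((b + δ : ℝ) : EReal) (c - δ)) (persIm V (a - (δ : EReal)) (c - δ))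
    (persIm U a c) hK hI' hJ _ (by rw [him])

end BoxLemmaProof

theorem stmt16 {k : Type} [Field k] (U V : PersMod k ℝ) (δ : ℝ) (hδ : 0 ≤ δ)
    (hI : Interleaved k U V δ) (a : EReal) (b c : ℝ) (d : EReal)
    (hab : a < (b : EReal)) (hbc : b ≤ c) (hcd : (c : EReal) < d)
    (hthick : b + δ ≤ c - δ) :
    persMeasure U a b c d ≤
      persMeasure V (a - (δ : EReal)) (b + δ) (c - δ) (d + (δ : EReal)) ∧
    persMeasure V a b c d ≤
      persMeasure U (a - (δ : EReal)) (b + δ) (c - δ) (d + (δ : EReal)) := by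
  constructor
  · exact boxHalf U V δ hδ hI a b c d hab hbc hcd hthick
  · refine boxHalf V U δ hδ ?_ a b c d hab hbc hcd hthick
    obtain ⟨φ, ψ, hφ, hψ, hψφ, hφψ⟩ := hI
    exact ⟨ψ, φ, hψ, hφ, hφψ, hψφ⟩
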